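/- Let p ≥ 7 be a prime with p ≡ 1 (mod 4), and let x_1,...,x_5 be five pairwise distinct nonzero elements of Z_p. Then the six-term sequence (x_1,...,x_5,0) is a (Q_p,1)-weighted zero-sum sequence: there exist a_1,...,a_6 ∈ Q_p with a_1x_1+...+a_5x_5 + a_6·0 = 0 and a_1+...+a_6 = 0. -/

import Mathlib

def Qp (p : ℕ) : Set (ZMod p) := {x | ∃ u : (ZMod p)ˣ, (u : ZMod p) ^ 2 = x}

def Np (p : ℕ) : Set (ZMod p) := {x | IsUnit x ∧ x ∉ Qp p}

section lems
variable {p : ℕ} [Fact p.Prime]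

/-- convenient characterization -/
def QR (p : ℕ) (x : ZMod p) : Prop := x ≠ 0 ∧ IsSquare x

lemma qr_iff {x : ZMod p} : x ∈ Qp p ↔ QR p x := by
  constructor
  · rintro ⟨u, rfl⟩
    exact ⟨by simpa using u.ne_zero, ⟨u, by ring⟩⟩
  · rintro ⟨hx, r, rfl⟩
    have hr : r ≠ 0 := by rintro rfl; simp at hx
    exact ⟨(isUnit_iff_ne_zero.mpr hr).unit, by rw [sq]; simp⟩

lemma qr_mul_iff {x y : ZMod p} (hx : x ≠ 0) (hy : y ≠ 0) :
    IsSquare (x * y) ↔ (IsSquare x ↔ IsSquare y) := by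
  have hxy : x * y ≠ 0 := mul_ne_zero hx hy
  have h1 := quadraticChar_one_iff_isSquare (F := ZMod p) hx
  have h2 := quadraticChar_one_iff_isSquare (F := ZMod p) hy
  have h3 := quadraticChar_one_iff_isSquare (F := ZMod p) hxy
  have hm : quadraticChar (ZMod p) (x * y)
      = quadraticChar (ZMod p) x * quadraticChar (ZMod p) y := map_mul _ _ _
  rcases quadraticChar_dichotomy (F := ZMod p) hx with e1 | e1 <;>
    rcases quadraticChar_dichotomy (F := ZMod p) hy with e2 | e2 <;>
      rw [e1] at h1 <;> rw [e2] at h2 <;>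
      simp only [e1, e2, hm] at h3 ⊢ <;> norm_num at h3 ⊢ <;> tauto

lemma qr_mul {x y : ZMod p} (hx : QR p x) (hy : QR p y) : QR p (x * y) :=
  ⟨mul_ne_zero hx.1 hy.1, hx.2.mul hy.2⟩

lemma qr_inv {x : ZMod p} (hx : QR p x) : QR p x⁻¹ := by
  obtain ⟨hx0, r, rfl⟩ := hx
  exact ⟨inv_ne_zero hx0, ⟨r⁻¹, by rw [mul_inv]⟩⟩

lemma nr_mul_nr {x y : ZMod p} (hx : x ≠ 0) (hy : y ≠ 0)
    (hx' : ¬ IsSquare x) (hy' : ¬ IsSquare y) : QR p (x * y) :=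
  ⟨mul_ne_zero hx hy, (qr_mul_iff hx hy).mpr (by tauto)⟩

lemma nr_of_qr_mul_nr {x y : ZMod p} (hx : QR p x) (hy : y ≠ 0)
    (hy' : ¬ IsSquare y) : ¬ IsSquare (x * y) := by
  rw [qr_mul_iff hx.1 hy]
  exact fun h => hy' (h.mp hx.2)

lemma qr_neg_one (hp1 : p % 4 = 1) : QR p (-1 : ZMod p) := by
  refine ⟨by simp [(Fact.out : p.Prime).one_lt.ne'], ?_⟩
  · rw [ZMod.exists_sq_eq_neg_one_iff]; omega

lemma qr_neg {x : ZMod p} (hp1 : p % 4 = 1) (hx : QR p x) : QR p (-x) := by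
  have := qr_mul (qr_neg_one hp1) hx; simpa using this

lemma qr_div {x y : ZMod p} (hx : QR p x) (hy : QR p y) : QR p (x / y) := by
  rw [div_eq_mul_inv]; exact qr_mul hx (qr_inv hy)

end lems

section lems2
variable {p : ℕ} [Fact p.Prime]

lemma nz_small {n : ℕ} (hp13 : 13 ≤ p) (hn0 : 0 < n) (hn : n < 13) :
    ((n : ℕ) : ZMod p) ≠ 0 := by
  intro h
  rw [ZMod.natCast_eq_zero_iff] at h
  have := Nat.le_of_dvd hn0 h
  omega

lemma nz2 (hp13 : 13 ≤ p) : (2 : ZMod p) ≠ 0 := by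
  have := nz_small (p := p) (n := 2) hp13 (by norm_num) (by norm_num); simpa using this
lemma nz3 (hp13 : 13 ≤ p) : (3 : ZMod p) ≠ 0 := by
  have := nz_small (p := p) (n := 3) hp13 (by norm_num) (by norm_num); simpa using this
lemma nz5 (hp13 : 13 ≤ p) : (5 : ZMod p) ≠ 0 := by
  have := nz_small (p := p) (n := 5) hp13 (by norm_num) (by norm_num); simpa using this
lemma nz7 (hp13 : 13 ≤ p) : (7 : ZMod p) ≠ 0 := by
  have := nz_small (p := p) (n := 7) hp13 (by norm_num) (by norm_num); simpa using this

lemma qr4 (hp13 : 13 ≤ p) : QR p (4 : ZMod p) :=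
  ⟨by rw [show (4 : ZMod p) = 2 * 2 by norm_num]; exact mul_ne_zero (nz2 hp13) (nz2 hp13),
   ⟨2, by norm_num⟩⟩
lemma qr9 (hp13 : 13 ≤ p) : QR p (9 : ZMod p) :=
  ⟨by rw [show (9 : ZMod p) = 3 * 3 by norm_num]; exact mul_ne_zero (nz3 hp13) (nz3 hp13),
   ⟨3, by norm_num⟩⟩
lemma qr25 (hp13 : 13 ≤ p) : QR p (25 : ZMod p) :=
  ⟨by rw [show (25 : ZMod p) = 5 * 5 by norm_num]; exact mul_ne_zero (nz5 hp13) (nz5 hp13),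
   ⟨5, by norm_num⟩⟩
lemma qr1 : QR p (1 : ZMod p) := ⟨one_ne_zero, ⟨1, by norm_num⟩⟩
lemma qr16 (hp13 : 13 ≤ p) : QR p (16 : ZMod p) := by
  have := qr_mul (qr4 hp13) (qr4 hp13); rw [show (4:ZMod p)*4 = 16 by norm_num] at this
  exact this

/-- Lemma A': two distinct QRs summing to a QR -/
lemma lemA (hp13 : 13 ≤ p) :
    ∃ α β γ : ZMod p, QR p α ∧ QR p β ∧ QR p γ ∧ α + β = γ ∧ α ≠ β := by
  by_cases h3 : IsSquare (3 : ZMod p)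
  · refine ⟨1, 3, 4, qr1, ⟨nz3 hp13, h3⟩, qr4 hp13, by norm_num, ?_⟩
    intro h
    exact nz2 hp13 (by linear_combination -h)
  · by_cases h5 : IsSquare (5 : ZMod p)
    · refine ⟨1, 4, 5, qr1, qr4 hp13, ⟨nz5 hp13, h5⟩, by norm_num, ?_⟩
      intro h
      exact nz3 hp13 (by linear_combination -h)
    · have h15 : QR p (15 : ZMod p) := by
        have := nr_mul_nr (p := p) (nz3 hp13) (nz5 hp13) h3 h5
        rw [show (3:ZMod p)*5 = 15 by norm_num] at this; exact this
      refine ⟨1, 15, 16, qr1, h15, qr16 hp13, by norm_num, ?_⟩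
      intro h
      have h14 : (14 : ZMod p) = 0 := by linear_combination -h
      rw [show (14 : ZMod p) = 2 * 7 by norm_num] at h14
      rcases mul_eq_zero.mp h14 with h | h
      exacts [nz2 hp13 h, nz7 hp13 h]

/-- every nonzero nonsquare is a sum of two QRs -/
lemma lemB {w : ZMod p} (hw : w ≠ 0) (hw' : ¬ IsSquare w) :
    ∃ α β : ZMod p, QR p α ∧ QR p β ∧ α + β = w := by
  obtain ⟨a, b, hab⟩ := ZMod.sq_add_sq p w
  have ha : a ≠ 0 := by
    rintro rfl; exact hw' ⟨b, by rw [← hab]; ring⟩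
  have hb : b ≠ 0 := by
    rintro rfl; exact hw' ⟨a, by rw [← hab]; ring⟩
  exact ⟨a ^ 2, b ^ 2, ⟨pow_ne_zero _ ha, ⟨a, sq a⟩⟩, ⟨pow_ne_zero _ hb, ⟨b, sq b⟩⟩, hab⟩

end lems2

section lems3
variable {p : ℕ} [Fact p.Prime]

/-- every nonzero element has a QR decomposition with distinct parts -/
lemma lemD' (hp13 : 13 ≤ p) {w : ZMod p} (hw : w ≠ 0) :
    ∃ α β : ZMod p, QR p α ∧ QR p β ∧ α + β = w ∧ α ≠ β := by
  by_cases hws : IsSquare w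
  · -- scale lemma A'
    obtain ⟨α, β, γ, hα, hβ, hγ, hsum, hne⟩ := lemA hp13
    have hlam : QR p (w / γ) := qr_div ⟨hw, hws⟩ hγ
    refine ⟨w / γ * α, w / γ * β, qr_mul hlam hα, qr_mul hlam hβ, ?_, ?_⟩
    · have hγ0 := hγ.1
      field_simp
      linear_combination hsum
    · exact fun h => hne (mul_left_cancel₀ hlam.1 h)
  · -- w is a nonsquare
    obtain ⟨a, b, hab⟩ := ZMod.sq_add_sq p w
    have ha : a ≠ 0 := by rintro rfl; exact hws ⟨b, by rw [← hab]; ring⟩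
    have hb : b ≠ 0 := by rintro rfl; exact hws ⟨a, by rw [← hab]; ring⟩
    by_cases hne : a ^ 2 ≠ b ^ 2
    · exact ⟨a ^ 2, b ^ 2, ⟨pow_ne_zero _ ha, ⟨a, sq a⟩⟩, ⟨pow_ne_zero _ hb, ⟨b, sq b⟩⟩,
        hab, hne⟩
    push_neg at hne
    -- w = 2 a², so 2 is a nonsquare
    have hw2 : w = 2 * a ^ 2 := by rw [← hab, hne]; ring
    have h2 : ¬ IsSquare (2 : ZMod p) := by
      intro h2
      exact hws (by rw [hw2]; exact h2.mul ⟨a, sq a⟩)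
    -- find an explicit nonsquare n₀ with a distinct-part QR decomposition
    have key : ∃ α β n₀ : ZMod p, QR p α ∧ QR p β ∧ α + β = n₀ ∧ α ≠ β ∧
        n₀ ≠ 0 ∧ ¬ IsSquare n₀ := by
      by_cases h5 : IsSquare (5 : ZMod p)
      · by_cases h3 : IsSquare (3 : ZMod p)
        · -- 3,5 squares, 8 = 3+5 nonsquare
          refine ⟨3, 5, 8, ⟨nz3 hp13, h3⟩, ⟨nz5 hp13, h5⟩, by norm_num, ?_, ?_, ?_⟩
          · intro h; exact nz2 hp13 (by linear_combination -h)
          · rw [show (8:ZMod p) = 2*4 by norm_num]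
            exact mul_ne_zero (nz2 hp13) (qr4 hp13).1
          · rw [show (8:ZMod p) = 4*2 by norm_num]
            exact nr_of_qr_mul_nr (qr4 hp13) (nz2 hp13) h2
        · -- 5 square, 3 nonsquare: 5 + 45 = 50, 50 = 2·25 nonsquare
          have h45 : QR p (45 : ZMod p) := by
            have := qr_mul (qr9 hp13) ⟨nz5 hp13, h5⟩
            rw [show (9:ZMod p)*5 = 45 by norm_num] at this; exact this
          refine ⟨5, 45, 50, ⟨nz5 hp13, h5⟩, h45, by norm_num, ?_, ?_, ?_⟩
          · intro h
            have h40 : (40 : ZMod p) = 0 := by linear_combination -h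
            rw [show (40:ZMod p) = 2*(4*5) by norm_num] at h40
            rcases mul_eq_zero.mp h40 with h | h
            · exact nz2 hp13 h
            · rcases mul_eq_zero.mp h with h | h
              exacts [(qr4 hp13).1 h, nz5 hp13 h]
          · rw [show (50:ZMod p) = 2*25 by norm_num]
            exact mul_ne_zero (nz2 hp13) (qr25 hp13).1
          · rw [show (50:ZMod p) = 25*2 by norm_num]
            exact nr_of_qr_mul_nr (qr25 hp13) (nz2 hp13) h2
      · -- 5 nonsquare: 1 + 4 = 5
        refine ⟨1, 4, 5, qr1, qr4 hp13, by norm_num, ?_, nz5 hp13, h5⟩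
        intro h; exact nz3 hp13 (by linear_combination -h)
    obtain ⟨α, β, n₀, hα, hβ, hsum, hne', hn0, hn0'⟩ := key
    have hlam : QR p (w / n₀) := nr_mul_nr hw (inv_ne_zero hn0) hws (by
      intro h
      refine hn0' ?_
      have h2' := h.mul ⟨n₀, sq n₀⟩
      rwa [show n₀⁻¹ * n₀ ^ 2 = n₀ by rw [sq, ← mul_assoc, inv_mul_cancel₀ hn0, one_mul]]
        at h2')
    refine ⟨w / n₀ * α, w / n₀ * β, qr_mul hlam hα, qr_mul hlam hβ, ?_, ?_⟩
    · field_simp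
      linear_combination hsum
    · exact fun h => hne' (mul_left_cancel₀ hlam.1 h)

/-- decomposition avoiding a specified first component -/
lemma lemD (hp13 : 13 ≤ p) {w : ZMod p} (hw : w ≠ 0) (z : ZMod p) :
    ∃ α β : ZMod p, QR p α ∧ QR p β ∧ α + β = w ∧ α ≠ z := by
  obtain ⟨α, β, hα, hβ, hsum, hne⟩ := lemD' hp13 hw
  by_cases h : α = z
  · exact ⟨β, α, hβ, hα, by rw [add_comm]; exact hsum, by rw [← h]; exact hne.symm⟩
  · exact ⟨α, β, hα, hβ, hsum, h⟩

lemma nr_div_nr {x y : ZMod p} (hx : x ≠ 0) (hy : y ≠ 0)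
    (hx' : ¬ IsSquare x) (hy' : ¬ IsSquare y) : QR p (x / y) := by
  have hyi : ¬ IsSquare (y⁻¹ : ZMod p) := by
    intro h
    refine hy' ?_
    have h2 := h.mul ⟨y, sq y⟩
    rwa [show y⁻¹ * y ^ 2 = y by rw [sq, ← mul_assoc, inv_mul_cancel₀ hy, one_mul]] at h2
  rw [div_eq_mul_inv]; exact nr_mul_nr hx (inv_ne_zero hy) hx' hyi

/-- lemma G: combine two cosets into a QR -/
lemma lemG (hp13 : 13 ≤ p) (hp1 : p % 4 = 1) {σ e : ZMod p} (hσ : σ ≠ 0) (he : e ≠ 0) :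
    ∃ s t : ZMod p, QR p s ∧ QR p t ∧ QR p (s * σ + t * e) := by
  obtain ⟨n, hn'⟩ := FiniteField.exists_nonsquare (F := ZMod p)
    (by rw [ZMod.ringChar_zmod_n]; omega)
  have hn : n ≠ 0 := fun h => hn' (h ▸ ⟨0, by ring⟩)
  obtain ⟨α, β, hα, hβ, hsum⟩ := lemB hn hn'
  by_cases hσs : IsSquare σ <;> by_cases hes : IsSquare e
  · obtain ⟨α', β', γ', hα', hβ', hγ', hsum', _⟩ := lemA hp13
    refine ⟨α' / σ, β' / e, qr_div hα' ⟨hσ, hσs⟩, qr_div hβ' ⟨he, hes⟩, ?_⟩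
    rw [div_mul_cancel₀ _ hσ, div_mul_cancel₀ _ he, hsum']; exact hγ'
  · refine ⟨(-β) / σ, n / e, qr_div (qr_neg hp1 hβ) ⟨hσ, hσs⟩, nr_div_nr hn he hn' hes, ?_⟩
    rw [div_mul_cancel₀ _ hσ, div_mul_cancel₀ _ he,
      show -β + n = α by rw [← hsum]; ring]
    exact hα
  · refine ⟨n / σ, (-β) / e, nr_div_nr hn hσ hn' hσs, qr_div (qr_neg hp1 hβ) ⟨he, hes⟩, ?_⟩
    rw [div_mul_cancel₀ _ hσ, div_mul_cancel₀ _ he,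
      show n + -β = α by rw [← hsum]; ring]
    exact hα
  · have hnσ : QR p (n * σ) := nr_mul_nr hn hσ hn' hσs
    have hne' : QR p (n * e) := nr_mul_nr hn he hn' hes
    refine ⟨α / (n * σ), β / (n * e), qr_div hα hnσ, qr_div hβ hne', ?_⟩
    rw [show α / (n * σ) * σ + β / (n * e) * e = 1 by
      field_simp; linear_combination hsum]
    exact qr1

end lems3

section keylem
variable {p : ℕ} [Fact p.Prime]

lemma keylem (hp13 : 13 ≤ p) (hp1 : p % 4 = 1) (y : Fin 5 → ZMod p)
    (hy : ∀ i, y i ≠ 0) (hinj : Function.Injective y)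
    (h01 : QR p (y 1 / y 0)) (h34 : QR p (y 4 / y 3)) :
    ∃ b : Fin 5 → ZMod p, (∀ i, QR p (b i)) ∧ (∑ i, b i * y i) = 0 ∧ QR p (∑ i, b i) := by
  have hy0 := hy 0; have hy1 := hy 1; have hy2 := hy 2; have hy3 := hy 3; have hy4 := hy 4
  set u := y 1 / y 0 with hu_def
  have hu : QR p u := h01
  have hu0 : u ≠ 0 := hu.1
  have hu1 : u ≠ 1 := by
    intro h
    rw [hu_def, div_eq_one_iff_eq hy0] at h
    exact (by decide : (1 : Fin 5) ≠ 0) (hinj h)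
  have hu1' : u - 1 ≠ 0 := sub_ne_zero.mpr hu1
  set v := y 2 / y 0 with hv_def
  have hv0 : v ≠ 0 := div_ne_zero hy2 hy0
  have hnv : (-v) ≠ 0 := neg_ne_zero.mpr hv0
  obtain ⟨α, β, hα, hβ, hsum, hαz⟩ := lemD hp13 hnv ((v - u) / (u - 1))
  set σ := α + β / u + 1 with hσ_def
  have hσ : σ ≠ 0 := by
    intro h
    apply hαz
    rw [eq_div_iff hu1']
    rw [hσ_def] at h
    have h2 : α * u + β + u = 0 := by
      field_simp at h
      linear_combination h
    linear_combination h2 - hsum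
  set q := y 4 / y 3 with hq_def
  have hq : QR p q := h34
  have hq1 : q ≠ 1 := by
    intro h
    rw [hq_def, div_eq_one_iff_eq hy3] at h
    exact (by decide : (4 : Fin 5) ≠ 3) (hinj h)
  have he : (1 : ZMod p) - q ≠ 0 := fun h => hq1 (by linear_combination -h)
  obtain ⟨s, t, hs, ht, hG⟩ := lemG hp13 hp1 hσ he
  refine ⟨![s * α, s * (β / u), s, -(t * q), t], ?_, ?_, ?_⟩
  · intro i
    fin_cases i
    · exact qr_mul hs hα
    · exact qr_mul hs (qr_div hβ hu)
    · exact hs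
    · exact qr_neg hp1 (qr_mul ht hq)
    · exact ht
  · rw [Fin.sum_univ_five]
    simp only [Matrix.cons_val_zero, Matrix.cons_val_one, Matrix.head_cons,
      Matrix.cons_val_two, Matrix.tail_cons, Matrix.cons_val_three, Matrix.cons_val_four]
    have e1 : y 1 = u * y 0 := by rw [hu_def, div_mul_cancel₀ _ hy0]
    have e2 : y 2 = v * y 0 := by rw [hv_def, div_mul_cancel₀ _ hy0]
    have e4 : y 4 = q * y 3 := by rw [hq_def, div_mul_cancel₀ _ hy3]
    rw [e1, e2, e4]
    field_simp
    linear_combination s * y 0 * hsum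
  · rw [Fin.sum_univ_five]
    simp only [Matrix.cons_val_zero, Matrix.cons_val_one, Matrix.head_cons,
      Matrix.cons_val_two, Matrix.tail_cons, Matrix.cons_val_three, Matrix.cons_val_four]
    rw [show s * α + s * (β / u) + s + -(t * q) + t = s * σ + t * (1 - q) by
      rw [hσ_def]; ring]
    exact hG
end keylem

lemma ratio_qr {p : ℕ} [Fact p.Prime] {a b : ZMod p} (ha : a ≠ 0) (hb : b ≠ 0)
    (h : IsSquare a ↔ IsSquare b) : QR p (b / a) := by
  by_cases hs : IsSquare a
  · exact qr_div ⟨hb, h.mp hs⟩ ⟨ha, hs⟩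
  · exact nr_div_nr hb ha (fun hh => hs (h.mpr hh)) hs

theorem stmt_18 (p : ℕ) [Fact p.Prime] (hp : 7 ≤ p) (hp1 : p % 4 = 1)
    (x : Fin 5 → ZMod p) (hnz : ∀ i, x i ≠ 0) (hinj : Function.Injective x) :
    ∃ a : Fin 6 → ZMod p, (∀ i, a i ∈ Qp p) ∧
      (∑ i : Fin 5, a (Fin.castSucc i) * x i) + a 5 * 0 = 0 ∧
      ∑ i, a i = 0 := by
  classical
  have hP : p.Prime := Fact.out
  have hp13 : 13 ≤ p := by
    by_contra h
    have h9 : p = 9 := by omega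
    rw [h9] at hP
    norm_num at hP
  -- pigeonhole: two indices with the same quadratic character
  let f : Fin 5 → Bool := fun i => decide (IsSquare (x i))
  obtain ⟨i, j, hij, hfij⟩ := Fintype.exists_ne_map_eq_of_card_lt f (by simp)
  -- among the remaining three, two more with the same character
  set s : Finset (Fin 5) := Finset.univ \ {i, j} with hs_def
  have hscard : s.card = 3 := by
    rw [hs_def, Finset.card_sdiff_of_subset (Finset.subset_univ _)]
    rw [Finset.card_insert_of_notMem (by simpa using hij), Finset.card_singleton]
    simp
  obtain ⟨k, hk, l, hl, hkl, hfkl⟩ :=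
    Finset.exists_ne_map_eq_of_card_lt_of_maps_to
      (show (Finset.univ : Finset Bool).card < s.card by rw [hscard]; simp)
      (fun a _ => Finset.mem_univ (f a))
  -- the leftover index
  have htcard : (s \ {k, l}).card = 1 := by
    rw [Finset.card_sdiff_of_subset (by
      intro z hz
      simp only [Finset.mem_insert, Finset.mem_singleton] at hz
      rcases hz with rfl | rfl
      exacts [hk, hl])]
    rw [hscard, Finset.card_insert_of_notMem (by simpa using hkl), Finset.card_singleton]
  obtain ⟨m, hm⟩ := Finset.card_eq_one.mp htcard
  have hmem : m ∈ s \ ({k, l} : Finset (Fin 5)) := by rw [hm]; exact Finset.mem_singleton_self m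
  -- distinctness facts
  have hks := Finset.mem_sdiff.mp hk
  have hls := Finset.mem_sdiff.mp hl
  have hms := Finset.mem_sdiff.mp hmem
  have hms' := Finset.mem_sdiff.mp hms.1
  have hki : k ≠ i := by intro h; exact hks.2 (by simp [h])
  have hkj : k ≠ j := by intro h; exact hks.2 (by simp [h])
  have hli : l ≠ i := by intro h; exact hls.2 (by simp [h])
  have hlj : l ≠ j := by intro h; exact hls.2 (by simp [h])
  have hmk : m ≠ k := by intro h; exact hms.2 (by simp [h])
  have hml : m ≠ l := by intro h; exact hms.2 (by simp [h])
  have hmi : m ≠ i := by intro h; exact hms'.2 (by simp [h])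
  have hmj : m ≠ j := by intro h; exact hms'.2 (by simp [h])
  have hik := hki.symm; have hjk := hkj.symm; have hil := hli.symm
  have hjl := hlj.symm; have hkm := hmk.symm; have hlm := hml.symm
  have him := hmi.symm; have hjm := hmj.symm; have hji := hij.symm
  -- the permutation
  have hginj : Function.Injective (![k, l, m, i, j] : Fin 5 → Fin 5) := by
    intro a b hab
    fin_cases a <;> fin_cases b <;> simp_all
  let e : Fin 5 ≃ Fin 5 := Equiv.ofBijective _ (Finite.injective_iff_bijective.mp hginj)
  have he0 : e 0 = k := rfl
  have he1 : e 1 = l := rfl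
  have he2 : e 2 = m := rfl
  have he3 : e 3 = i := rfl
  have he4 : e 4 = j := rfl
  -- apply the key lemma to x ∘ e
  obtain ⟨b, hbmem, hbsum, hbS⟩ := keylem hp13 hp1 (fun t => x (e t))
    (fun t => hnz (e t)) (hinj.comp e.injective)
    (by show QR p (x (e 1) / x (e 0)); rw [he0, he1]; exact ratio_qr (hnz k) (hnz l) (decide_eq_decide.mp hfkl))
    (by show QR p (x (e 4) / x (e 3)); rw [he3, he4]; exact ratio_qr (hnz i) (hnz j) (decide_eq_decide.mp hfij))
  set a5 : Fin 5 → ZMod p := fun t => b (e.symm t) with ha5_def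
  have hsum1 : ∑ t, a5 t * x t = 0 := by
    rw [← hbsum]
    exact (Fintype.sum_equiv e _ _ (fun t => by simp [ha5_def])).symm
  have hsum2 : ∑ t, a5 t = ∑ t, b t :=
    (Fintype.sum_equiv e _ _ (fun t => by simp [ha5_def])).symm
  set S : ZMod p := ∑ t, a5 t with hS_def
  have hSqr : QR p S := by rw [hsum2]; exact hbS
  refine ⟨Fin.snoc a5 (-S), ?_, ?_, ?_⟩
  · intro t
    induction t using Fin.lastCases with
    | last => rw [Fin.snoc_last, qr_iff]; exact qr_neg hp1 hSqr
    | cast t => rw [Fin.snoc_castSucc, qr_iff, ha5_def]; exact hbmem _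
  · have h5 : (5 : Fin 6) = Fin.last 5 := by decide
    rw [h5, Fin.snoc_last]
    simp only [Fin.snoc_castSucc]
    rw [hsum1]
    ring
  · rw [Fin.sum_univ_castSucc]
    simp only [Fin.snoc_castSucc, Fin.snoc_last]
    rw [← hS_def]
    ring
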